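/- Let f be a Hecke-multiplicative function, x ≥ 1 real, p ≤ √x a prime, and define F(y) = (Σ_{n ≤ x/y} |f(n)|²) / (Σ_{n ≤ x} |f(n)|²), assuming Σ_{n ≤ x}|f(n)|² > 0. Then |f(p)| ≤ 2 / F(p²)^{1/4}, provided F(p²) > 0. -/

import Mathlib

open Finset

def HeckeMult (f : ℕ → ℂ) : Prop :=
  f 1 = 1 ∧ ∀ m n : ℕ, 0 < m → 0 < n →
    f m * f n = ∑ d ∈ (Nat.gcd m n).divisors, f (m * n / d ^ 2)

lemma hecke_pointwise (f : ℕ → ℂ) (hf : HeckeMult f) (p : ℕ) (hp : p.Prime)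
    (n : ℕ) (hn : 0 < n) :
    ‖f p‖ ^ 2 * ‖f n‖ ≤
      ‖f (p ^ 2 * n)‖ + 2 * ‖f n‖ +
        (if p ^ 2 ∣ n then ‖f (n / p ^ 2)‖ else 0) := by
  obtain ⟨h1, hmul⟩ := hf
  have hp0 : 0 < p := hp.pos
  have hpp : f p * f p = f (p ^ 2) + 1 := by
    rw [hmul p p hp0 hp0, Nat.gcd_self, hp.divisors,
      Finset.sum_pair hp.one_lt.ne]
    have e1 : p * p / 1 ^ 2 = p ^ 2 := by simp [pow_two]
    have e2 : p * p / p ^ 2 = 1 := by rw [pow_two, Nat.div_self (Nat.mul_pos hp0 hp0)]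
    rw [e1, e2, h1]
  have habs : ‖f p‖ ^ 2 * ‖f n‖
      = ‖f p * f p * f n‖ := by
    rw [norm_mul, norm_mul, sq]
  have key : f p * f p * f n = (f (p ^ 2) + 1) * f n := by rw [hpp]
  have hpos2 : 0 < p ^ 2 := pow_pos hp0 2
  by_cases h2 : p ^ 2 ∣ n
  · obtain ⟨m, rfl⟩ := h2
    have hm : 0 < m := by
      rcases Nat.eq_zero_or_pos m with rfl | h
      · simp at hn
      · exact h
    have hsum : f (p ^ 2) * f (p ^ 2 * m)
        = f (p ^ 2 * (p ^ 2 * m)) + f (p ^ 2 * m) + f m := by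
      rw [hmul _ _ hpos2 hn, Nat.gcd_eq_left ⟨m, rfl⟩, Nat.sum_divisors_prime_pow hp]
      rw [Finset.sum_range_succ, Finset.sum_range_succ, Finset.sum_range_one]
      have e0 : p ^ 2 * (p ^ 2 * m) / (p ^ 0) ^ 2 = p ^ 2 * (p ^ 2 * m) := by simp
      have e1 : p ^ 2 * (p ^ 2 * m) / (p ^ 1) ^ 2 = p ^ 2 * m := by
        rw [pow_one, Nat.mul_div_cancel_left _ hpos2]
      have e2 : p ^ 2 * (p ^ 2 * m) / (p ^ 2) ^ 2 = m := by
        have : p ^ 2 * (p ^ 2 * m) = (p ^ 2) ^ 2 * m := by ring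
        rw [this, Nat.mul_div_cancel_left _ (pow_pos hp0 4 |>.trans_le (by rw [← pow_mul]))]
      rw [e0, e1, e2]
    have hid : f p * f p * f (p ^ 2 * m)
        = f (p ^ 2 * (p ^ 2 * m)) + 2 * f (p ^ 2 * m) + f m := by
      rw [key, add_mul, one_mul, hsum]; ring
    rw [if_pos ⟨m, rfl⟩, Nat.mul_div_cancel_left m hpos2, habs, hid]
    calc ‖f (p ^ 2 * (p ^ 2 * m)) + 2 * f (p ^ 2 * m) + f m‖
        ≤ ‖f (p ^ 2 * (p ^ 2 * m)) + 2 * f (p ^ 2 * m)‖ + ‖f m‖ :=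
          norm_add_le _ _
      _ ≤ ‖f (p ^ 2 * (p ^ 2 * m))‖ + ‖2 * f (p ^ 2 * m)‖
            + ‖f m‖ := by gcongr; exact norm_add_le _ _
      _ = _ := by rw [norm_mul, Complex.norm_two]
  · rw [if_neg h2, add_zero]
    by_cases hpn : p ∣ n
    · obtain ⟨m, rfl⟩ := hpn
      have hpm : ¬ p ∣ m := fun h => h2 (by rw [pow_two]; exact mul_dvd_mul_left p h)
      have hg : Nat.gcd (p ^ 2) (p * m) = p := by
        rw [pow_two, Nat.gcd_mul_left, Nat.Coprime.gcd_eq_one (hp.coprime_iff_not_dvd.mpr hpm),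
          mul_one]
      have hsum : f (p ^ 2) * f (p * m) = f (p ^ 2 * (p * m)) + f (p * m) := by
        rw [hmul _ _ hpos2 hn, hg, hp.divisors, Finset.sum_pair hp.one_lt.ne]
        have e1 : p ^ 2 * (p * m) / 1 ^ 2 = p ^ 2 * (p * m) := by simp
        have e2 : p ^ 2 * (p * m) / p ^ 2 = p * m := Nat.mul_div_cancel_left _ hpos2
        rw [e1, e2]
      have hid : f p * f p * f (p * m) = f (p ^ 2 * (p * m)) + 2 * f (p * m) := by
        rw [key, add_mul, one_mul, hsum]; ring
      rw [habs, hid]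
      calc ‖f (p ^ 2 * (p * m)) + 2 * f (p * m)‖
          ≤ ‖f (p ^ 2 * (p * m))‖ + ‖2 * f (p * m)‖ :=
            norm_add_le _ _
        _ = _ := by rw [norm_mul, Complex.norm_two]
    · have hg : Nat.gcd (p ^ 2) n = 1 :=
        Nat.Coprime.pow_left 2 (hp.coprime_iff_not_dvd.mpr hpn)
      have hsum : f (p ^ 2) * f n = f (p ^ 2 * n) := by
        rw [hmul _ _ hpos2 hn, hg, Nat.divisors_one, Finset.sum_singleton]
        norm_num
      have hid : f p * f p * f n = f (p ^ 2 * n) + f n := by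
        rw [key, add_mul, one_mul, hsum]
      rw [habs, hid]
      calc ‖f (p ^ 2 * n) + f n‖
          ≤ ‖f (p ^ 2 * n)‖ + ‖f n‖ := norm_add_le _ _
        _ ≤ ‖f (p ^ 2 * n)‖ + 2 * ‖f n‖ := by
            have := norm_nonneg (f n); linarith


theorem hecke_fp_F_bound (f : ℕ → ℂ) (hf : HeckeMult f) (x : ℝ) (hx : 1 ≤ x)
    (p : ℕ) (hp : p.Prime) (hpx : (p : ℝ) ≤ Real.sqrt x)
    (F : ℝ → ℝ)
    (hF : ∀ y : ℝ, F y = (∑ n ∈ Finset.Icc 1 ⌊x / y⌋₊, ‖f n‖ ^ 2) /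
      (∑ n ∈ Finset.Icc 1 ⌊x⌋₊, ‖f n‖ ^ 2))
    (htot : 0 < ∑ n ∈ Finset.Icc 1 ⌊x⌋₊, ‖f n‖ ^ 2)
    (hFpos : 0 < F ((p : ℝ) ^ 2)) :
    ‖f p‖ ≤ 2 / (F ((p : ℝ) ^ 2)) ^ ((1 : ℝ) / 4) := by
  have hp0 : 0 < p := hp.pos
  have hpR : (1 : ℝ) ≤ (p : ℝ) := by exact_mod_cast hp0
  have hp2R : (0 : ℝ) < (p : ℝ) ^ 2 := by positivity
  have hp2R1 : (1 : ℝ) ≤ (p : ℝ) ^ 2 := by nlinarith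
  have hpos2 : 0 < p ^ 2 := pow_pos hp0 2
  set M := ⌊x⌋₊ with hM
  set N := ⌊x / (p : ℝ) ^ 2⌋₊ with hN
  set S := ∑ n ∈ Finset.Icc 1 M, ‖f n‖ ^ 2 with hS
  set T := ∑ n ∈ Finset.Icc 1 N, ‖f n‖ ^ 2 with hT
  have hNM : N ≤ M := Nat.floor_mono (div_le_self (by linarith) hp2R1)
  have hTS : T ≤ S := Finset.sum_le_sum_of_subset_of_nonneg
    (Finset.Icc_subset_Icc_right hNM) (fun i _ _ => by positivity)
  have hNx : (N : ℝ) ≤ x / (p : ℝ) ^ 2 := Nat.floor_le (by positivity)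
  have hA : ∑ n ∈ Finset.Icc 1 N, ‖f (p ^ 2 * n)‖ ^ 2 ≤ S := by
    rw [← Finset.sum_image (f := fun m => ‖f m‖ ^ 2) (g := fun n => p ^ 2 * n)
      (fun a _ b _ h => Nat.eq_of_mul_eq_mul_left hpos2 h)]
    apply Finset.sum_le_sum_of_subset_of_nonneg _ (fun i _ _ => by positivity)
    intro m hm
    simp only [Finset.mem_image, Finset.mem_Icc] at hm ⊢
    obtain ⟨n, ⟨hn1, hn2⟩, rfl⟩ := hm
    refine ⟨Nat.one_le_iff_ne_zero.mpr (by positivity), Nat.le_floor ?_⟩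
    have hnx : (n : ℝ) ≤ x / (p : ℝ) ^ 2 := le_trans (by exact_mod_cast hn2) hNx
    push_cast
    calc ((p : ℝ) ^ 2) * n ≤ (p : ℝ) ^ 2 * (x / (p : ℝ) ^ 2) := by
          exact mul_le_mul_of_nonneg_left hnx (by positivity)
      _ = x := by field_simp
  have hC : ∑ n ∈ Finset.Icc 1 N,
      (if p ^ 2 ∣ n then ‖f (n / p ^ 2)‖ else 0) ^ 2 ≤ S := by
    have e : ∀ n, (if p ^ 2 ∣ n then ‖f (n / p ^ 2)‖ else 0) ^ 2
        = if p ^ 2 ∣ n then ‖f (n / p ^ 2)‖ ^ 2 else 0 := by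
      intro n; split_ifs <;> simp
    simp only [e]
    rw [← Finset.sum_filter]
    rw [← Finset.sum_image (f := fun m => ‖f m‖ ^ 2) (g := fun n => n / p ^ 2) ?_]
    · apply Finset.sum_le_sum_of_subset_of_nonneg _ (fun i _ _ => by positivity)
      intro m hm
      simp only [Finset.mem_image, Finset.mem_filter, Finset.mem_Icc] at hm ⊢
      obtain ⟨n, ⟨⟨hn1, hn2⟩, hdvd⟩, rfl⟩ := hm
      constructor
      · exact (Nat.one_le_div_iff hpos2).mpr (Nat.le_of_dvd hn1 hdvd)
      · exact le_trans (Nat.div_le_self _ _) (le_trans hn2 hNM)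
    · intro a ha b hb h
      simp only [Finset.mem_coe, Finset.mem_filter, Finset.mem_Icc] at ha hb
      have h1 : a / p ^ 2 * p ^ 2 = a := Nat.div_mul_cancel ha.2
      have h2 : b / p ^ 2 * p ^ 2 = b := Nat.div_mul_cancel hb.2
      rw [← h1, ← h2]; exact congrArg (· * p ^ 2) h
  have hpt : ∀ n ∈ Finset.Icc 1 N, ‖f p‖ ^ 4 * ‖f n‖ ^ 2 ≤
      4 * (‖f (p ^ 2 * n)‖ ^ 2 + 2 * ‖f n‖ ^ 2 +
        (if p ^ 2 ∣ n then ‖f (n / p ^ 2)‖ else 0) ^ 2) := by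
    intro n hn
    simp only [Finset.mem_Icc] at hn
    have h := hecke_pointwise f hf p hp n hn.1
    set A := ‖f (p ^ 2 * n)‖ with hA'
    set B := ‖f n‖ with hB'
    set C := (if p ^ 2 ∣ n then ‖f (n / p ^ 2)‖ else 0) with hC'
    have hA0 : 0 ≤ A := norm_nonneg _
    have hB0 : 0 ≤ B := norm_nonneg _
    have hC0 : 0 ≤ C := by rw [hC']; split_ifs; exacts [norm_nonneg _, le_refl 0]
    have hL0 : 0 ≤ ‖f p‖ ^ 2 * B := by positivity
    have hsq : (‖f p‖ ^ 2 * B) * (‖f p‖ ^ 2 * B)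
        ≤ (A + 2 * B + C) * (A + 2 * B + C) :=
      mul_le_mul h h hL0 (by linarith)
    nlinarith [sq_nonneg (A - B), sq_nonneg (B - C), sq_nonneg (A - C)]
  have hmain : ‖f p‖ ^ 4 * T ≤ 16 * S := by
    have step1 : ‖f p‖ ^ 4 * T
        = ∑ n ∈ Finset.Icc 1 N, ‖f p‖ ^ 4 * ‖f n‖ ^ 2 := by
      rw [hT, Finset.mul_sum]
    have step2 := Finset.sum_le_sum hpt
    have step3 : ∑ n ∈ Finset.Icc 1 N,
        (4 : ℝ) * (‖f (p ^ 2 * n)‖ ^ 2 + 2 * ‖f n‖ ^ 2 +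
          (if p ^ 2 ∣ n then ‖f (n / p ^ 2)‖ else 0) ^ 2)
        = 4 * (∑ n ∈ Finset.Icc 1 N, ‖f (p ^ 2 * n)‖ ^ 2) + 8 * T
          + 4 * (∑ n ∈ Finset.Icc 1 N,
            (if p ^ 2 ∣ n then ‖f (n / p ^ 2)‖ else 0) ^ 2) := by
      rw [hT]
      simp only [mul_add, Finset.sum_add_distrib, ← Finset.mul_sum]
      ring
    calc ‖f p‖ ^ 4 * T
        = _ := step1
      _ ≤ _ := step2
      _ = _ := step3
      _ ≤ 4 * S + 8 * S + 4 * S := by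
          have h8 : (8:ℝ) * T ≤ 8 * S := by linarith
          have h4A : (4:ℝ) * (∑ n ∈ Finset.Icc 1 N, ‖f (p ^ 2 * n)‖ ^ 2) ≤ 4 * S := by linarith
          have h4C : (4:ℝ) * (∑ n ∈ Finset.Icc 1 N,
              (if p ^ 2 ∣ n then ‖f (n / p ^ 2)‖ else 0) ^ 2) ≤ 4 * S := by linarith
          linarith
      _ = 16 * S := by ring
  have hFval : F ((p : ℝ) ^ 2) = T / S := by rw [hF]
  have hT0 : 0 < T := by
    have h := hFpos
    rw [hFval] at h
    have : T = T / S * S := (div_mul_cancel₀ T htot.ne').symm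
    rw [this]
    exact mul_pos h htot
  have hF16 : ‖f p‖ ^ 4 * F ((p : ℝ) ^ 2) ≤ 16 := by
    rw [hFval, mul_div_assoc']
    rw [div_le_iff₀ htot]
    linarith
  have hc4 : 0 < F ((p : ℝ) ^ 2) ^ ((1 : ℝ) / 4) := Real.rpow_pos_of_pos hFpos _
  rw [le_div_iff₀ hc4]
  have hpow : (‖f p‖ * F ((p : ℝ) ^ 2) ^ ((1 : ℝ) / 4)) ^ (4 : ℕ)
      ≤ 2 ^ (4 : ℕ) := by
    rw [mul_pow]
    have hc : (F ((p : ℝ) ^ 2) ^ ((1 : ℝ) / 4)) ^ (4 : ℕ) = F ((p : ℝ) ^ 2) := by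
      rw [← Real.rpow_natCast (F ((p : ℝ) ^ 2) ^ ((1 : ℝ) / 4)) 4,
        ← Real.rpow_mul hFpos.le]
      norm_num
    rw [hc]
    norm_num
    linarith
  exact le_of_pow_le_pow_left₀ (by norm_num) (by norm_num) hpow
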